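/- Let 𝔞_J be a positive definite symmetric sesquilinear form on a J-invariant subspace D (J a self-adjoint involution, 𝔞_J[Jx,Jy]=𝔞_J[x,y]) and 𝔳 a symmetric off-diagonal form on D with finite relative bound v₀ = sup_{x≠0}|𝔳[x]|/𝔞_J[x]. Then the form 𝔞_J + 𝔳 is nonnegative if and only if v₀ ≤ 1. -/

import Mathlib

open scoped ComplexConjugate

/-- Birman–Schwinger-type criterion: for a positive definite symmetric `J`-invariant form `aJ`
and a symmetric off-diagonal form `v` on `D` whose relative bound is
`v₀ = sup_{0≠x∈D} |v[x]|/aJ[x] < ∞`, the form `aJ + v` is nonnegative iff `v₀ ≤ 1`. -/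
theorem offdiag_form_nonneg_iff_relative_bound_le_one
    {H : Type*} [NormedAddCommGroup H] [InnerProductSpace ℂ H] [CompleteSpace H]
    (J : H →L[ℂ] H) (hJsa : IsSelfAdjoint J) (hJ2 : ∀ x : H, J (J x) = x)
    (D : Submodule ℂ H) (hJD : ∀ x ∈ D, J x ∈ D)
    (aJ v : H → H → ℂ)
    -- aJ is a sesquilinear, symmetric, positive definite form on D, invariant under J
    (haadd₁ : ∀ x y z, x ∈ D → y ∈ D → z ∈ D → aJ (x + y) z = aJ x z + aJ y z)
    (haadd₂ : ∀ x y z, x ∈ D → y ∈ D → z ∈ D → aJ x (y + z) = aJ x y + aJ x z)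
    (hasmul₁ : ∀ (c : ℂ) (x y : H), x ∈ D → y ∈ D → aJ (c • x) y = conj c * aJ x y)
    (hasmul₂ : ∀ (c : ℂ) (x y : H), x ∈ D → y ∈ D → aJ x (c • y) = c * aJ x y)
    (hasym : ∀ x y, x ∈ D → y ∈ D → aJ x y = conj (aJ y x))
    (hapos : ∀ x, x ∈ D → x ≠ 0 → 0 < (aJ x x).re)
    (haJ : ∀ x y, x ∈ D → y ∈ D → aJ (J x) (J y) = aJ x y)
    -- v is a sesquilinear, symmetric, off-diagonal form on D
    (hadd₁ : ∀ x y z, x ∈ D → y ∈ D → z ∈ D → v (x + y) z = v x z + v y z)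
    (hadd₂ : ∀ x y z, x ∈ D → y ∈ D → z ∈ D → v x (y + z) = v x y + v x z)
    (hsmul₁ : ∀ (c : ℂ) (x y : H), x ∈ D → y ∈ D → v (c • x) y = conj c * v x y)
    (hsmul₂ : ∀ (c : ℂ) (x y : H), x ∈ D → y ∈ D → v x (c • y) = c * v x y)
    (hsym : ∀ x y, x ∈ D → y ∈ D → v x y = conj (v y x))
    (hoff : ∀ x y, x ∈ D → y ∈ D → v (J x) y = -v x (J y))
    -- v₀ is the (finite) relative bound of v with respect to aJ
    (v₀ : ℝ)
    (hv₀ : IsLUB {r : ℝ | ∃ x, x ∈ D ∧ x ≠ 0 ∧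
      r = ‖v x x‖ / (aJ x x).re} v₀) :
    (∀ x, x ∈ D → 0 ≤ (aJ x x).re + (v x x).re) ↔ v₀ ≤ 1 := by
  have h0D : (0:H) ∈ D := D.zero_mem
  constructor
  · intro h
    apply hv₀.2
    intro r hr
    obtain ⟨x, hx, hx0, rfl⟩ := hr
    have hJx : J x ∈ D := hJD x hx
    have hvJ : v (J x) (J x) = - v x x := by
      rw [hoff x (J x) hx hJx, hJ2]
    have haJx : aJ (J x) (J x) = aJ x x := haJ x x hx hx
    have h1 := h x hx
    have h2 := h (J x) hJx
    rw [hvJ, haJx, Complex.neg_re] at h2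
    have hpos := hapos x hx hx0
    rw [div_le_one hpos]
    have hvim : (v x x).im = 0 := by
      have hs := hsym x x hx hx
      have : (v x x).im = -(v x x).im := by
        conv_lhs => rw [hs]
        simp
      linarith
    have habs : ‖v x x‖ = |(v x x).re| := by
      rw [Complex.norm_def, Complex.normSq_apply, hvim]
      rw [mul_zero, add_zero, Real.sqrt_mul_self_eq_abs]
    rw [habs, abs_le]
    constructor <;> linarith
  · intro hv1 x hx
    by_cases hx0 : x = 0
    · subst hx0
      have ha0 : aJ 0 0 = 0 := by
        have := hasmul₁ 0 0 0 h0D h0D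
        simpa using this
      have hv0 : v 0 0 = 0 := by
        have := hsmul₁ 0 0 0 h0D h0D
        simpa using this
      simp [ha0, hv0]
    · have hmem : ‖v x x‖ / (aJ x x).re ∈
        {r : ℝ | ∃ x, x ∈ D ∧ x ≠ 0 ∧ r = ‖v x x‖ / (aJ x x).re} :=
        ⟨x, hx, hx0, rfl⟩
      have hle := (hv₀.1 hmem).trans hv1
      have hpos := hapos x hx hx0
      rw [div_le_one hpos] at hle
      have := Complex.abs_re_le_norm (v x x)
      have := neg_abs_le (v x x).re
      linarith
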